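/- Let ν be a Borel probability measure on ℝ that is absolutely continuous with respect to Lebesgue measure with density bounded by 1 almost everywhere, and let 𝐱 ∈ ℝ and 0 < η < 1. For z ∈ ℂ∖ℝ define G'(z) = Log(z + 1 − 𝐱 − η) − Log(z − 𝐱) − ∫_ℝ 1/(z − y) dν(y), where Log is the principal branch of the complex logarithm. Then the set of non-real solutions of G'(z) = 0 is invariant under complex conjugation and has at most two elements; i.e., the equation G'(z) = 0 has either 0 or 2 non-real roots, and in the latter case they are complex conjugates of each other. -/

import Mathlib

open Complex MeasureTheory Metric Set Filter
open scoped Real Topology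

namespace Stmt4Aux

/-- The Stieltjes transform of `ν`. -/
noncomputable def mST (ν : Measure ℝ) (z : ℂ) : ℂ := ∫ y : ℝ, 1 / (z - (y : ℂ)) ∂ν

variable {ν : Measure ℝ} [IsProbabilityMeasure ν]

lemma sub_ofReal_ne_zero {z : ℂ} (hz : z.im ≠ 0) (t : ℝ) : z - (t : ℂ) ≠ 0 := by
  intro h
  apply hz
  have := congrArg Complex.im h
  simpa using this

lemma cont_integrand {z : ℂ} (hz : z.im ≠ 0) :
    Continuous fun t : ℝ => 1 / (z - (t : ℂ)) :=
  Continuous.div continuous_const (by continuity) fun t => sub_ofReal_ne_zero hz t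

lemma norm_integrand_le {z : ℂ} (hz : z.im ≠ 0) (t : ℝ) :
    ‖1 / (z - (t : ℂ))‖ ≤ |z.im|⁻¹ := by
  rw [norm_div, norm_one]
  have h1 : |z.im| ≤ ‖z - t‖ := by
    have := Complex.abs_im_le_norm (z - t)
    simpa using this
  have h2 : (0:ℝ) < |z.im| := abs_pos.mpr hz
  rw [div_le_iff₀ (lt_of_lt_of_le h2 h1), inv_mul_eq_div, le_div_iff₀ h2]
  nlinarith

lemma integrable_integrand {z : ℂ} (hz : z.im ≠ 0) :
    Integrable (fun t : ℝ => 1 / (z - (t : ℂ))) ν :=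
  (integrable_const (|z.im|⁻¹)).mono' (cont_integrand hz).aestronglyMeasurable
    (ae_of_all _ (norm_integrand_le hz))

lemma im_integrand (z : ℂ) (t : ℝ) :
    (1 / (z - (t : ℂ))).im = -z.im / Complex.normSq (z - t) := by
  rw [one_div, Complex.inv_im]
  simp

lemma im_mt {z : ℂ} (hz : z.im ≠ 0) :
    (mST ν z).im = ∫ t : ℝ, -z.im / Complex.normSq (z - (t : ℂ)) ∂ν := by
  rw [mST]
  rw [show (∫ y : ℝ, 1 / (z - (y : ℂ)) ∂ν).im
      = ∫ t : ℝ, (1 / (z - (t : ℂ))).im ∂ν from (integral_im (integrable_integrand hz)).symm]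
  congr 1
  ext t
  exact im_integrand z t

lemma normSq_sub_pos {z : ℂ} (hz : z.im ≠ 0) (t : ℝ) :
    0 < Complex.normSq (z - (t : ℂ)) :=
  Complex.normSq_pos.mpr (sub_ofReal_ne_zero hz t)

lemma integrable_im_part {z : ℂ} (hz : z.im ≠ 0) :
    Integrable (fun t : ℝ => z.im / Complex.normSq (z - (t : ℂ))) ν := by
  apply ((integrable_integrand (ν := ν) hz).im.neg).congr
  filter_upwards with t
  show -(RCLike.im (1 / (z - (t : ℂ)))) = z.im / Complex.normSq (z - (t : ℂ))
  rw [show RCLike.im (1 / (z - (t : ℂ))) = (1 / (z - (t : ℂ))).im from rfl,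
    im_integrand, neg_div, neg_neg]

lemma im_mt_neg {z : ℂ} (hz : 0 < z.im) : (mST ν z).im < 0 := by
  rw [im_mt hz.ne']
  have heq : (∫ t : ℝ, -z.im / Complex.normSq (z - (t : ℂ)) ∂ν)
      = -∫ t : ℝ, z.im / Complex.normSq (z - (t : ℂ)) ∂ν := by
    rw [← integral_neg]
    congr 1; ext t; ring
  rw [heq, neg_lt, neg_zero]
  rw [integral_pos_iff_support_of_nonneg_ae _ (integrable_im_part hz.ne')]
  · have hsupp : (Function.support fun t : ℝ => z.im / Complex.normSq (z - (t : ℂ)))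
        = Set.univ := by
      ext t
      simp only [Function.mem_support, Set.mem_univ, iff_true]
      exact (div_pos hz (normSq_sub_pos hz.ne' t)).ne'
    rw [hsupp]
    simp
  · filter_upwards with t
    exact (div_pos hz (normSq_sub_pos hz.ne' t)).le

/-! ### The Poisson kernel integral over `ℝ` equals `π` -/

lemma poisson_eq (x : ℝ) {y : ℝ} (hy : 0 < y) (t : ℝ) :
    y / ((t - x) ^ 2 + y ^ 2) = y⁻¹ * (1 + ((t - x) * y⁻¹) ^ 2)⁻¹ := by
  have hy' : y ≠ 0 := hy.ne'
  field_simp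
  ring

lemma integrable_poisson (x : ℝ) {y : ℝ} (hy : 0 < y) :
    Integrable (fun t : ℝ => y / ((t - x) ^ 2 + y ^ 2)) volume := by
  have h1 : Integrable (fun s : ℝ => (1 + s ^ 2)⁻¹) volume := integrable_inv_one_add_sq
  have h2 : Integrable (fun t : ℝ => (1 + (t * y⁻¹) ^ 2)⁻¹) volume :=
    h1.comp_mul_right' (inv_ne_zero hy.ne')
  have h3 : Integrable (fun t : ℝ => (1 + ((t - x) * y⁻¹) ^ 2)⁻¹) volume :=
    h2.comp_sub_right x
  have h4 := h3.const_mul y⁻¹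
  apply h4.congr
  filter_upwards with t
  exact (poisson_eq x hy t).symm

lemma integral_poisson (x : ℝ) {y : ℝ} (hy : 0 < y) :
    ∫ t : ℝ, y / ((t - x) ^ 2 + y ^ 2) = π := by
  have h0 : ∀ t : ℝ, y / ((t - x) ^ 2 + y ^ 2) = y⁻¹ * (1 + ((t - x) * y⁻¹) ^ 2)⁻¹ :=
    poisson_eq x hy
  calc ∫ t : ℝ, y / ((t - x) ^ 2 + y ^ 2)
      = ∫ t : ℝ, y⁻¹ * (1 + ((t - x) * y⁻¹) ^ 2)⁻¹ := by
        congr 1; ext t; exact h0 t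
    _ = y⁻¹ * ∫ t : ℝ, (1 + ((t - x) * y⁻¹) ^ 2)⁻¹ := integral_const_mul _ _
    _ = y⁻¹ * ∫ t : ℝ, (1 + (t * y⁻¹) ^ 2)⁻¹ := by
        rw [integral_sub_right_eq_self (fun t : ℝ => (1 + (t * y⁻¹) ^ 2)⁻¹) x]
    _ = y⁻¹ * (|y| • ∫ s : ℝ, (1 + s ^ 2)⁻¹) := by
        rw [Measure.integral_comp_inv_mul_right (fun s : ℝ => (1 + s ^ 2)⁻¹) y]
    _ = π := by
        rw [integral_univ_inv_one_add_sq, abs_of_pos hy, smul_eq_mul]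
        field_simp

/-! ### Lower bound `-π` on the imaginary part, using the density bound -/

lemma im_mt_gt (hac : ν ≪ (volume : Measure ℝ))
    (hden : ∀ᵐ x ∂(volume : Measure ℝ), ν.rnDeriv volume x ≤ 1)
    {z : ℂ} (hz : 0 < z.im) : -π < (mST ν z).im := by
  set g : ℝ → ℝ := fun t => z.im / ((t - z.re) ^ 2 + z.im ^ 2) with hg
  have hns : ∀ t : ℝ, Complex.normSq (z - (t : ℂ)) = (t - z.re) ^ 2 + z.im ^ 2 := by
    intro t
    simp only [Complex.normSq_apply, Complex.sub_re, Complex.sub_im, Complex.ofReal_re,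
      Complex.ofReal_im]
    ring
  have hgpos : ∀ t, 0 < g t := by
    intro t
    apply div_pos hz
    have := hns t
    rw [← this]
    exact normSq_sub_pos hz.ne' t
  have hgcont : Continuous g := by
    apply Continuous.div continuous_const (by continuity)
    intro t
    rw [← hns t]
    exact (normSq_sub_pos hz.ne' t).ne'
  have hgint : Integrable g volume := integrable_poisson z.re hz
  set ρ : ℝ → ℝ := fun t => (ν.rnDeriv volume t).toReal with hρ
  have hρmeas : Measurable ρ := (Measure.measurable_rnDeriv ν volume).ennreal_toReal
  have hρ1 : ∀ᵐ t ∂(volume : Measure ℝ), ρ t ≤ 1 := by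
    filter_upwards [hden] with t ht
    have := ENNReal.toReal_mono (by simp) ht
    simpa using this
  have hρ0 : ∀ t, 0 ≤ ρ t := fun t => ENNReal.toReal_nonneg
  have hint2 : Integrable (fun t => ρ t * g t) volume := by
    apply hgint.mono' ((hρmeas.mul hgcont.measurable).aestronglyMeasurable)
    filter_upwards [hρ1] with t ht
    rw [Real.norm_eq_abs, Pi.mul_apply, _root_.abs_of_nonneg (mul_nonneg (hρ0 t) (hgpos t).le)]
    nlinarith [hgpos t, hρ0 t]
  have hν_eq : ∫ t, g t ∂ν = ∫ t, ρ t * g t ∂volume := by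
    rw [← MeasureTheory.integral_rnDeriv_smul hac (f := g)]
    simp [smul_eq_mul]
    rfl
  have hπ : ∫ t, g t ∂volume = π := integral_poisson z.re hz
  set d : ℝ → ℝ := fun t => g t - ρ t * g t with hd
  have hdint : Integrable d volume := hgint.sub hint2
  have hd0 : 0 ≤ᵐ[volume] d := by
    filter_upwards [hρ1] with t ht
    have := hgpos t
    simp only [hd, Pi.zero_apply]
    nlinarith
  have hdne : ∫ t, d t ∂volume ≠ 0 := by
    intro h0
    have hae : d =ᵐ[volume] 0 := (integral_eq_zero_iff_of_nonneg_ae hd0 hdint).mp h0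
    have hρae : ρ =ᵐ[volume] (fun _ => (1:ℝ)) := by
      filter_upwards [hae] with t ht
      have hgt := hgpos t
      simp only [hd, Pi.zero_apply] at ht
      have : (1 - ρ t) * g t = 0 := by nlinarith
      rcases mul_eq_zero.mp this with h | h
      · linarith
      · exact absurd h hgt.ne'
    have hrnae : ν.rnDeriv volume =ᵐ[volume] (fun _ => (1 : ENNReal)) := by
      filter_upwards [hρae, hden] with t ht hle
      have hne : ν.rnDeriv volume t ≠ ⊤ := by
        intro htop
        rw [htop] at hle
        simp at hle
      have h5 := ENNReal.ofReal_toReal hne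
      rw [← h5]
      have ht' : (ν.rnDeriv volume t).toReal = 1 := ht
      rw [ht']
      simp
    have hveq : (volume : Measure ℝ) = ν := by
      have h1 := Measure.withDensity_rnDeriv_eq ν volume hac
      rw [withDensity_congr_ae hrnae] at h1
      rw [← h1]
      exact (withDensity_one (μ := (volume : Measure ℝ))).symm
    have h2 : ν Set.univ = 1 := measure_univ
    rw [← hveq, Real.volume_univ] at h2
    exact (by simp : (⊤ : ENNReal) ≠ 1) h2
  have hdpos : 0 < ∫ t, d t ∂volume :=
    lt_of_le_of_ne (integral_nonneg_of_ae hd0) (Ne.symm hdne)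
  have hsub : ∫ t, d t ∂volume = π - ∫ t, ρ t * g t ∂volume := by
    rw [hd]
    rw [integral_sub hgint hint2, hπ]
  have hlt : ∫ t, g t ∂ν < π := by
    rw [hν_eq]
    linarith [hdpos, hsub]
  have him : (mST ν z).im = - ∫ t, g t ∂ν := by
    rw [im_mt hz.ne', ← integral_neg]
    congr 1
    ext t
    rw [hns t]
    simp only [hg]
    ring
  rw [him]
  linarith

/-! ### Differentiability of the Stieltjes transform on the upper half-plane -/

lemma mST_differentiableAt {z : ℂ} (hz : 0 < z.im) :
    DifferentiableAt ℂ (mST ν) z := by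
  set ε : ℝ := z.im / 2 with hε
  have hεpos : 0 < ε := by positivity
  have hball : ∀ w ∈ ball z ε, ε < w.im := by
    intro w hw
    have h1 : |w.im - z.im| ≤ ‖w - z‖ := by
      have := Complex.abs_im_le_norm (w - z)
      simpa using this
    have h2 : ‖w - z‖ < ε := by
      rw [mem_ball, Complex.dist_eq] at hw
      exact hw
    have := abs_lt.mp (lt_of_le_of_lt h1 h2)
    simp only [hε] at *
    linarith [this.1]
  have key := hasDerivAt_integral_of_dominated_loc_of_lip
    (F := fun w (t : ℝ) => 1 / (w - (t : ℂ))) (F' := fun t : ℝ => -((z - (t : ℂ)) ^ 2)⁻¹)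
    (x₀ := z) (μ := ν) (bound := fun _ => (ε ^ 2)⁻¹)
    (ball_mem_nhds z hεpos) ?_ (integrable_integrand hz.ne') ?_ ?_ (integrable_const _) ?_
  · exact key.2.differentiableAt
  · -- eventual measurability
    have hU : {w : ℂ | 0 < w.im} ∈ 𝓝 z := (isOpen_lt continuous_const Complex.continuous_im).mem_nhds hz
    filter_upwards [hU] with w hw
    exact (cont_integrand (ne_of_gt hw)).aestronglyMeasurable
  · exact (Continuous.neg (Continuous.inv₀ (by continuity) (fun t =>
      pow_ne_zero 2 (sub_ofReal_ne_zero hz.ne' t)))).aestronglyMeasurable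
  · -- Lipschitz
    filter_upwards with t
    rw [lipschitzOnWith_iff_dist_le_mul]
    intro w hw w' hw'
    have hwim := hball w hw
    have hwim' := hball w' hw'
    have hwne : w - (t : ℂ) ≠ 0 := sub_ofReal_ne_zero (by linarith : (0:ℝ) < w.im).ne' t
    have hwne' : w' - (t : ℂ) ≠ 0 := sub_ofReal_ne_zero (by linarith : (0:ℝ) < w'.im).ne' t
    have habs : ε ≤ ‖w - (t : ℂ)‖ := by
      have h1 : |(w - (t : ℂ)).im| ≤ ‖w - (t : ℂ)‖ := Complex.abs_im_le_norm _
      have h2 : (w - (t : ℂ)).im = w.im := by simp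
      rw [h2, abs_of_pos (by linarith)] at h1
      linarith
    have habs' : ε ≤ ‖w' - (t : ℂ)‖ := by
      have h1 : |(w' - (t : ℂ)).im| ≤ ‖w' - (t : ℂ)‖ := Complex.abs_im_le_norm _
      have h2 : (w' - (t : ℂ)).im = w'.im := by simp
      rw [h2, abs_of_pos (by linarith)] at h1
      linarith
    have hd : dist (1 / (w - (t : ℂ))) (1 / (w' - (t : ℂ)))
        = ‖w' - w‖ / (‖w - (t : ℂ)‖ * ‖w' - (t : ℂ)‖) := by
      rw [Complex.dist_eq, one_div, one_div, inv_sub_inv hwne hwne', norm_div, norm_mul]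
      congr 2
      ring
    have hcoe : ((Real.nnabs ((ε ^ 2)⁻¹) : NNReal) : ℝ) = (ε ^ 2)⁻¹ := by
      rw [Real.coe_nnabs, _root_.abs_of_nonneg (by positivity)]
    rw [hd, hcoe]
    have hprod : ε ^ 2 ≤ ‖w - (t : ℂ)‖ * ‖w' - (t : ℂ)‖ := by
      nlinarith
    have hnum : ‖w' - w‖ = dist w w' := by rw [dist_comm, Complex.dist_eq]
    rw [hnum]
    have h3 : dist w w' / (‖w - (t : ℂ)‖ * ‖w' - (t : ℂ)‖)
        ≤ dist w w' / ε ^ 2 :=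
      div_le_div_of_nonneg_left dist_nonneg (by positivity) hprod
    calc _ ≤ dist w w' / ε ^ 2 := h3
      _ = (ε ^ 2)⁻¹ * dist w w' := by rw [div_eq_inv_mul]
  · filter_upwards with t
    have h1 : HasDerivAt (fun w : ℂ => w - (t : ℂ)) 1 z := (hasDerivAt_id z).sub_const _
    have h2 := h1.inv (sub_ofReal_ne_zero hz.ne' t)
    simp only [one_div]
    have h3 : HasDerivAt (fun x : ℂ => (x - (t : ℂ))⁻¹) (-1 / (z - (t : ℂ)) ^ 2) z := h2
    exact h3.congr_deriv (by ring)

/-! ### The self-map `Φ` of the upper half-plane -/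

noncomputable def Phi (ν : Measure ℝ) (x₀ η : ℝ) (z : ℂ) : ℂ :=
  (x₀ : ℂ) + ((1 - η : ℝ) : ℂ) * (Complex.exp (mST ν z) - 1)⁻¹

lemma exp_mST_sub_one_im_neg (hac : ν ≪ (volume : Measure ℝ))
    (hden : ∀ᵐ x ∂(volume : Measure ℝ), ν.rnDeriv volume x ≤ 1)
    {z : ℂ} (hz : 0 < z.im) : (Complex.exp (mST ν z) - 1).im < 0 := by
  have h1 : (mST ν z).im < 0 := im_mt_neg hz
  have h2 : -π < (mST ν z).im := im_mt_gt hac hden hz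
  have h3 : Real.sin (mST ν z).im < 0 := Real.sin_neg_of_neg_of_neg_pi_lt h1 h2
  have h4 : (Complex.exp (mST ν z)).im = Real.exp (mST ν z).re * Real.sin (mST ν z).im :=
    Complex.exp_im _
  have h5 : (Complex.exp (mST ν z) - 1).im = (Complex.exp (mST ν z)).im := by simp
  rw [h5, h4]
  have := Real.exp_pos (mST ν z).re
  nlinarith

lemma exp_mST_sub_one_ne_zero (hac : ν ≪ (volume : Measure ℝ))
    (hden : ∀ᵐ x ∂(volume : Measure ℝ), ν.rnDeriv volume x ≤ 1)
    {z : ℂ} (hz : 0 < z.im) : Complex.exp (mST ν z) - 1 ≠ 0 := by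
  intro h
  have := exp_mST_sub_one_im_neg hac hden hz
  rw [h] at this
  simp at this

lemma Phi_im_pos (hac : ν ≪ (volume : Measure ℝ))
    (hden : ∀ᵐ x ∂(volume : Measure ℝ), ν.rnDeriv volume x ≤ 1)
    (x₀ : ℝ) {η : ℝ} (hη1 : η < 1)
    {z : ℂ} (hz : 0 < z.im) : 0 < (Phi ν x₀ η z).im := by
  have hne := exp_mST_sub_one_ne_zero hac hden hz
  have him := exp_mST_sub_one_im_neg hac hden hz
  have h1 : ((Complex.exp (mST ν z) - 1)⁻¹).im
      = -(Complex.exp (mST ν z) - 1).im / Complex.normSq (Complex.exp (mST ν z) - 1) :=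
    Complex.inv_im _
  have h2 : 0 < ((Complex.exp (mST ν z) - 1)⁻¹).im := by
    rw [h1]
    apply div_pos (by linarith) (Complex.normSq_pos.mpr hne)
  have h3 : (Phi ν x₀ η z).im = (1 - η) * ((Complex.exp (mST ν z) - 1)⁻¹).im := by
    simp [Phi, Complex.add_im, Complex.mul_im]
  rw [h3]
  nlinarith

lemma Phi_differentiableAt (hac : ν ≪ (volume : Measure ℝ))
    (hden : ∀ᵐ x ∂(volume : Measure ℝ), ν.rnDeriv volume x ≤ 1)
    (x₀ : ℝ) (η : ℝ)
    {z : ℂ} (hz : 0 < z.im) : DifferentiableAt ℂ (Phi ν x₀ η) z := by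
  have hne := exp_mST_sub_one_ne_zero hac hden hz
  have h1 : DifferentiableAt ℂ (fun w => Complex.exp (mST ν w) - 1) z :=
    ((mST_differentiableAt hz).cexp).sub_const 1
  exact (differentiableAt_const _).add ((differentiableAt_const _).mul (h1.inv hne))

/-- Non-real roots of the equation are fixed points of `Φ`. -/
lemma root_fixed_point (hac : ν ≪ (volume : Measure ℝ))
    (hden : ∀ᵐ x ∂(volume : Measure ℝ), ν.rnDeriv volume x ≤ 1)
    (x₀ : ℝ) {η : ℝ} (hη1 : η < 1)
    {z : ℂ} (hz : 0 < z.im)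
    (hroot : Complex.log (z + 1 - (x₀ : ℂ) - (η : ℂ)) - Complex.log (z - (x₀ : ℂ)) = mST ν z) :
    Phi ν x₀ η z = z := by
  set A : ℂ := z + 1 - (x₀ : ℂ) - (η : ℂ) with hA
  set B : ℂ := z - (x₀ : ℂ) with hB
  have hAne : A ≠ 0 := by
    intro h
    have := congrArg Complex.im h
    simp [hA] at this
    exact hz.ne' this
  have hBne : B ≠ 0 := by
    intro h
    have := congrArg Complex.im h
    simp [hB] at this
    exact hz.ne' this
  have hE : A / B = Complex.exp (mST ν z) := by
    rw [← hroot, Complex.exp_sub, Complex.exp_log hAne, Complex.exp_log hBne]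
  have hAB : A - B = ((1 - η : ℝ) : ℂ) := by
    simp only [hA, hB]
    push_cast
    ring
  have hABmul : A = Complex.exp (mST ν z) * B := by
    rw [← hE, div_mul_cancel₀ _ hBne]
  have hkey : B * (Complex.exp (mST ν z) - 1) = ((1 - η : ℝ) : ℂ) := by
    rw [← hAB, hABmul]
    ring
  have hne := exp_mST_sub_one_ne_zero hac hden hz
  have hBval : B = ((1 - η : ℝ) : ℂ) * (Complex.exp (mST ν z) - 1)⁻¹ := by
    rw [← hkey, mul_assoc, mul_inv_cancel₀ hne, mul_one]
  rw [Phi, ← hBval, hB]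
  ring

/-! ### `Φ` is not the identity on the upper half-plane -/

lemma Phi_ne_id (hac : ν ≪ (volume : Measure ℝ))
    (hden : ∀ᵐ x ∂(volume : Measure ℝ), ν.rnDeriv volume x ≤ 1)
    (x₀ : ℝ) {η : ℝ} (hη0 : 0 < η) (hη1 : η < 1) :
    ¬ (∀ z : ℂ, 0 < z.im → Phi ν x₀ η z = z) := by
  intro hid
  set T : ℕ → ℝ := fun n => (n : ℝ) + 1 with hT
  have hTpos : ∀ n, 0 < T n := fun n => by positivity
  set zn : ℕ → ℂ := fun n => (x₀ : ℂ) + (T n : ℝ) * Complex.I with hzn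
  have him : ∀ n, (zn n).im = T n := by intro n; simp [hzn]
  have himpos : ∀ n, 0 < (zn n).im := fun n => by rw [him n]; exact hTpos n
  have hTIne : ∀ n, ((T n : ℝ) : ℂ) * Complex.I ≠ 0 := by
    intro n
    refine mul_ne_zero ?_ Complex.I_ne_zero
    exact_mod_cast (hTpos n).ne'
  set w : ℕ → ℂ := fun n => mST ν (zn n) with hw
  have hwne : ∀ n, w n ≠ 0 := by
    intro n h
    have h2 : (w n).im < 0 := im_mt_neg (himpos n)
    rw [h] at h2
    simp at h2
  have hsubne : ∀ n (t : ℝ), zn n - (t : ℂ) ≠ 0 := fun n t =>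
    sub_ofReal_ne_zero (himpos n).ne' t
  -- from the identity hypothesis
  have h1 : ∀ n, (((T n : ℝ) : ℂ) * Complex.I) * (Complex.exp (w n) - 1)
      = ((1 - η : ℝ) : ℂ) := by
    intro n
    have hfix := hid (zn n) (himpos n)
    rw [Phi] at hfix
    have hne := exp_mST_sub_one_ne_zero hac hden (himpos n)
    have h2 : ((1 - η : ℝ) : ℂ) * (Complex.exp (mST ν (zn n)) - 1)⁻¹
        = ((T n : ℝ) : ℂ) * Complex.I := by
      have h3 := congrArg (fun u => u - (x₀ : ℂ)) hfix
      simp only [hzn] at h3 ⊢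
      simpa using h3
    have h4 := congrArg (fun u => u * (Complex.exp (mST ν (zn n)) - 1)) h2
    simp only [inv_mul_cancel_right₀ hne] at h4
    have h5 : w n = mST ν (zn n) := rfl
    rw [h5, ← h4]
  -- limit facts
  have hTinv : Tendsto (fun n => (((T n : ℝ) : ℂ) * Complex.I)⁻¹) atTop (𝓝 0) := by
    rw [tendsto_zero_iff_norm_tendsto_zero]
    have hnorm : ∀ n, ‖(((T n : ℝ) : ℂ) * Complex.I)⁻¹‖ = (T n)⁻¹ := by
      intro n
      rw [norm_inv, norm_mul, Complex.norm_I, Complex.norm_real, Real.norm_eq_abs,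
        abs_of_pos (hTpos n), mul_one]
    simp only [hnorm]
    have h5 : Tendsto (fun n : ℕ => ((n : ℝ) + 1)⁻¹) atTop (𝓝 0) := by
      have := tendsto_one_div_add_atTop_nhds_zero_nat (𝕜 := ℝ)
      simpa [one_div] using this
    exact h5
  have hA : Tendsto (fun n => (((T n : ℝ) : ℂ) * Complex.I) * w n) atTop (𝓝 1) := by
    have heq : ∀ n, (((T n : ℝ) : ℂ) * Complex.I) * w n
        = ∫ t : ℝ, (((T n : ℝ) : ℂ) * Complex.I) * (1 / (zn n - (t : ℂ))) ∂ν := by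
      intro n
      rw [show w n = ∫ t : ℝ, 1 / (zn n - (t : ℂ)) ∂ν from rfl, ← integral_const_mul]
    have hone : (1 : ℂ) = ∫ _ : ℝ, (1 : ℂ) ∂ν := by simp
    rw [hone]
    have key := tendsto_integral_filter_of_dominated_convergence (μ := ν) (l := (atTop : Filter ℕ))
      (F := fun n (t : ℝ) => (((T n : ℝ) : ℂ) * Complex.I) * (1 / (zn n - (t : ℂ))))
      (f := fun _ : ℝ => (1 : ℂ)) (bound := fun _ => (1 : ℝ)) ?_ ?_ (integrable_const _) ?_
    · have : (fun n => (((T n : ℝ) : ℂ) * Complex.I) * w n)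
          = fun n => ∫ t : ℝ, (((T n : ℝ) : ℂ) * Complex.I) * (1 / (zn n - (t : ℂ))) ∂ν := by
        ext n; exact heq n
      rw [this]
      exact key
    · filter_upwards with n
      exact (continuous_const.mul (cont_integrand (himpos n).ne')).aestronglyMeasurable
    · filter_upwards with n
      filter_upwards with t
      rw [norm_mul, norm_div, norm_one]
      have habs : T n ≤ ‖zn n - (t : ℂ)‖ := by
        have h6 : |(zn n - (t : ℂ)).im| ≤ ‖zn n - (t : ℂ)‖ :=
          Complex.abs_im_le_norm _
        have h7 : (zn n - (t : ℂ)).im = T n := by simp [him n]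
        rw [h7, abs_of_pos (hTpos n)] at h6
        exact h6
      have h8 : ‖((T n : ℝ) : ℂ) * Complex.I‖ = T n := by
        rw [norm_mul, Complex.norm_I, Complex.norm_real, Real.norm_eq_abs,
          abs_of_pos (hTpos n), mul_one]
      rw [h8]
      rw [mul_one_div]
      rw [div_le_one (lt_of_lt_of_le (hTpos n) habs)]
      exact habs
    · filter_upwards with t
      have hrw : ∀ n, (((T n : ℝ) : ℂ) * Complex.I) * (1 / (zn n - (t : ℂ)))
          = ((zn n - (t : ℂ)) * (((T n : ℝ) : ℂ) * Complex.I)⁻¹)⁻¹ := by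
        intro n
        rw [mul_inv, inv_inv, one_div, mul_comm]
      simp only [hrw]
      have hlim : Tendsto (fun n => (zn n - (t : ℂ)) * (((T n : ℝ) : ℂ) * Complex.I)⁻¹)
          atTop (𝓝 1) := by
        have hsplit : ∀ n, (zn n - (t : ℂ)) * (((T n : ℝ) : ℂ) * Complex.I)⁻¹
            = ((x₀ : ℂ) - (t : ℂ)) * (((T n : ℝ) : ℂ) * Complex.I)⁻¹ + 1 := by
          intro n
          have hzz : zn n - (t : ℂ) = ((x₀ : ℂ) - (t : ℂ)) + ((T n : ℝ) : ℂ) * Complex.I := by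
            rw [hzn]; ring
          rw [hzz, add_mul, mul_inv_cancel₀ (hTIne n)]
        simp only [hsplit]
        have h9 : Tendsto (fun n => ((x₀ : ℂ) - (t : ℂ)) * (((T n : ℝ) : ℂ) * Complex.I)⁻¹)
            atTop (𝓝 0) := by
          have := hTinv.const_mul ((x₀ : ℂ) - (t : ℂ))
          simpa using this
        have := h9.add_const (1 : ℂ)
        simpa using this
      have := hlim.inv₀ one_ne_zero
      simpa using this
  have hB : Tendsto w atTop (𝓝 0) := by
    have heq : w = fun n => (((T n : ℝ) : ℂ) * Complex.I)⁻¹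
        * ((((T n : ℝ) : ℂ) * Complex.I) * w n) := by
      ext n
      rw [← mul_assoc, inv_mul_cancel₀ (hTIne n), one_mul]
    rw [heq]
    have := hTinv.mul hA
    simpa using this
  have hB' : Tendsto w atTop (𝓝[≠] 0) := by
    rw [tendsto_nhdsWithin_iff]
    exact ⟨hB, Eventually.of_forall fun n => hwne n⟩
  have hC : Tendsto (fun n => (Complex.exp (w n) - 1) / (w n)) atTop (𝓝 1) := by
    have hder := Complex.hasDerivAt_exp 0
    rw [hasDerivAt_iff_tendsto_slope] at hder
    have hcomp := hder.comp hB'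
    rw [Complex.exp_zero] at hcomp
    have heq : (fun n => slope Complex.exp 0 (w n))
        = fun n => (Complex.exp (w n) - 1) / (w n) := by
      ext n
      rw [slope_def_field, Complex.exp_zero, sub_zero]
    rw [← heq]
    exact hcomp
  have hD : Tendsto (fun n => (((T n : ℝ) : ℂ) * Complex.I) * (Complex.exp (w n) - 1))
      atTop (𝓝 1) := by
    have heq : ∀ n, (((T n : ℝ) : ℂ) * Complex.I) * (Complex.exp (w n) - 1)
        = ((((T n : ℝ) : ℂ) * Complex.I) * w n) * ((Complex.exp (w n) - 1) / (w n)) := by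
      intro n
      field_simp [hwne n]
    simp only [heq]
    have := hA.mul hC
    simpa using this
  have hfinal : ((1 - η : ℝ) : ℂ) = 1 := by
    have hconst : Tendsto (fun _ : ℕ => ((1 - η : ℝ) : ℂ)) atTop (𝓝 ((1 - η : ℝ) : ℂ)) :=
      tendsto_const_nhds
    have heq : (fun _ : ℕ => ((1 - η : ℝ) : ℂ))
        = fun n => (((T n : ℝ) : ℂ) * Complex.I) * (Complex.exp (w n) - 1) := by
      ext n
      exact (h1 n).symm
    rw [heq] at hconst
    exact tendsto_nhds_unique hconst hD
  have : (1 - η : ℝ) = 1 := by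
    exact_mod_cast hfinal
  linarith

/-! ### A holomorphic self-map of the upper half-plane with two fixed points is the identity -/

lemma uhp_fixed_points (f : ℂ → ℂ)
    (hdiff : ∀ z : ℂ, 0 < z.im → DifferentiableAt ℂ f z)
    (hmaps : ∀ z : ℂ, 0 < z.im → 0 < (f z).im)
    {z₁ z₂ : ℂ} (h₁ : 0 < z₁.im) (h₂ : 0 < z₂.im) (hne12 : z₁ ≠ z₂)
    (hf₁ : f z₁ = z₁) (hf₂ : f z₂ = z₂) :
    ∀ z : ℂ, 0 < z.im → f z = z := by
  classical
  set zc : ℂ := (starRingEnd ℂ) z₁ with hzc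
  have hzcim : zc.im = -z₁.im := by simp [hzc]
  have hzcre : zc.re = z₁.re := by simp [hzc]
  set c : ℂ → ℂ := fun z => (z - z₁) / (z - zc) with hc
  set cinv : ℂ → ℂ := fun w => (z₁ - zc * w) / (1 - w) with hcinv
  have hden1 : ∀ z : ℂ, 0 < z.im → z - zc ≠ 0 := by
    intro z hz h
    have h5 := congrArg Complex.im h
    rw [Complex.sub_im, hzcim] at h5
    simp at h5
    linarith
  have hcball : ∀ z : ℂ, 0 < z.im → c z ∈ ball (0 : ℂ) 1 := by
    intro z hz
    rw [mem_ball, dist_zero_right, hc]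
    simp only
    rw [norm_div, div_lt_one (norm_pos_iff.mpr (hden1 z hz))]
    have hsq : Complex.normSq (z - z₁) < Complex.normSq (z - zc) := by
      simp only [Complex.normSq_apply, Complex.sub_re, Complex.sub_im, hzcim, hzcre]
      nlinarith [hz, h₁]
    have hh1 := Complex.sq_norm (z - z₁)
    have hh2 := Complex.sq_norm (z - zc)
    nlinarith [norm_nonneg (z - z₁), norm_nonneg (z - zc)]
  have hball_ns : ∀ w : ℂ, w ∈ ball (0 : ℂ) 1 → Complex.normSq w < 1 := by
    intro w hw
    rw [mem_ball, dist_zero_right] at hw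
    have := Complex.sq_norm w
    nlinarith [norm_nonneg w]
  have hball_ne1 : ∀ w : ℂ, w ∈ ball (0 : ℂ) 1 → (1 : ℂ) - w ≠ 0 := by
    intro w hw h
    have hw' : w = 1 := by linear_combination -h
    rw [mem_ball, dist_zero_right, hw'] at hw
    simp at hw
  have hcinv_im : ∀ w : ℂ, w ∈ ball (0 : ℂ) 1 → 0 < (cinv w).im := by
    intro w hw
    have hns := hball_ns w hw
    have hw1 := hball_ne1 w hw
    rw [hcinv]
    simp only
    rw [Complex.div_im, div_sub_div_same]
    have hnspos : 0 < Complex.normSq (1 - w) := Complex.normSq_pos.mpr hw1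
    have hnum : (z₁ - zc * w).im * (1 - w).re - (z₁ - zc * w).re * (1 - w).im
        = z₁.im * (1 - Complex.normSq w) := by
      simp only [Complex.sub_im, Complex.sub_re, Complex.mul_im, Complex.mul_re, hzcim, hzcre,
        Complex.normSq_apply, Complex.one_re, Complex.one_im]
      ring
    rw [hnum]
    exact div_pos (mul_pos h₁ (by linarith)) hnspos
  have hlinv : ∀ z : ℂ, 0 < z.im → cinv (c z) = z := by
    intro z hz
    have hzne : z - zc ≠ 0 := hden1 z hz
    have hz1ne : z₁ - zc ≠ 0 := by
      intro h
      have h5 := congrArg Complex.im h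
      rw [Complex.sub_im, hzcim] at h5
      simp at h5
      linarith
    have hcne1 : (1 : ℂ) - c z ≠ 0 := hball_ne1 _ (hcball z hz)
    rw [hcinv, hc] at *
    simp only at hcne1 ⊢
    rw [div_eq_iff hcne1]
    field_simp at hcne1 ⊢
    ring
  have hc1 : c z₁ = 0 := by
    rw [hc]
    simp
  set w₂ : ℂ := c z₂ with hw₂
  have hw₂ball : w₂ ∈ ball (0 : ℂ) 1 := hcball z₂ h₂
  have hw₂ne : w₂ ≠ 0 := by
    intro h
    rw [hw₂, hc] at h
    simp only at h
    rw [div_eq_zero_iff] at h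
    rcases h with h | h
    · exact hne12 (sub_eq_zero.mp h).symm
    · exact hden1 z₂ h₂ h
  set g : ℂ → ℂ := fun w => c (f (cinv w)) with hg
  have hgc : ∀ z : ℂ, 0 < z.im → g (c z) = c (f z) := by
    intro z hz
    rw [hg]
    simp only
    rw [hlinv z hz]
  have hg0 : g 0 = 0 := by
    have := hgc z₁ h₁
    rw [hc1] at this
    rw [this, hf₁, hc1]
  have hgw₂ : g w₂ = w₂ := by
    have := hgc z₂ h₂
    rw [← hw₂] at this
    rw [this, hf₂]
  have hgmaps : MapsTo g (ball (0 : ℂ) 1) (ball (g 0) 1) := by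
    rw [hg0]
    intro w hw
    exact hcball _ (hmaps _ (hcinv_im w hw))
  have hgdiff : DifferentiableOn ℂ g (ball (0 : ℂ) 1) := by
    intro w hw
    apply DifferentiableAt.differentiableWithinAt
    have hd1 : DifferentiableAt ℂ cinv w := by
      rw [hcinv]
      apply DifferentiableAt.div
      · exact (differentiableAt_const _).sub ((differentiableAt_const _).mul differentiableAt_id)
      · exact (differentiableAt_const _).sub differentiableAt_id
      · exact hball_ne1 w hw
    have hupper := hcinv_im w hw
    have hd2 : DifferentiableAt ℂ f (cinv w) := hdiff _ hupper
    have hupper2 := hmaps _ hupper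
    have hd3 : DifferentiableAt ℂ c (f (cinv w)) := by
      rw [hc]
      apply DifferentiableAt.div
      · exact differentiableAt_id.sub (differentiableAt_const _)
      · exact differentiableAt_id.sub (differentiableAt_const _)
      · exact hden1 _ hupper2
    exact hd3.comp w (hd2.comp w hd1)
  have hslope : dslope g 0 w₂ = 1 := by
    rw [dslope_of_ne g hw₂ne, slope_def_field, hgw₂, hg0, sub_zero, div_self hw₂ne]
  have heq : ‖dslope g 0 w₂‖ = 1 / 1 := by
    rw [hslope]
    simp
  have haffine := Complex.affine_of_mapsTo_ball_of_exists_norm_dslope_eq_div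
    hgdiff (hgmaps.mono_right ball_subset_closedBall) hw₂ball heq
  have hgid : ∀ w ∈ ball (0 : ℂ) 1, g w = w := by
    intro w hw
    have := haffine hw
    rw [hslope, hg0] at this
    simpa using this
  intro z hz
  have h5 : c (f z) = c z := by
    rw [← hgc z hz]
    exact hgid _ (hcball z hz)
  have h6 := congrArg cinv h5
  rw [hlinv _ (hmaps z hz), hlinv _ hz] at h6
  exact h6

lemma upper_root_unique (hac : ν ≪ (volume : Measure ℝ))
    (hden : ∀ᵐ x ∂(volume : Measure ℝ), ν.rnDeriv volume x ≤ 1)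
    (x₀ : ℝ) {η : ℝ} (hη0 : 0 < η) (hη1 : η < 1)
    {z₁ z₂ : ℂ} (h₁ : 0 < z₁.im) (h₂ : 0 < z₂.im)
    (e₁ : Complex.log (z₁ + 1 - (x₀ : ℂ) - (η : ℂ)) - Complex.log (z₁ - (x₀ : ℂ)) = mST ν z₁)
    (e₂ : Complex.log (z₂ + 1 - (x₀ : ℂ) - (η : ℂ)) - Complex.log (z₂ - (x₀ : ℂ)) = mST ν z₂) :
    z₁ = z₂ := by
  by_contra hne
  exact Phi_ne_id hac hden x₀ hη0 hη1
    (uhp_fixed_points (Phi ν x₀ η) (fun z hz => Phi_differentiableAt hac hden x₀ η hz)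
      (fun z hz => Phi_im_pos hac hden x₀ hη1 hz) h₁ h₂ hne
      (root_fixed_point hac hden x₀ hη1 h₁ e₁) (root_fixed_point hac hden x₀ hη1 h₂ e₂))

end Stmt4Aux

open Stmt4Aux in
/-- Lemma 2.4: for a probability measure `ν` on `ℝ` with density bounded by `1`,
`x₀ ∈ ℝ` and `0 < η < 1`, the equation
`Log(z + 1 - x₀ - η) - Log(z - x₀) - ∫ 1/(z - y) dν(y) = 0`
has either 0 or 2 non-real roots: the set of non-real roots is invariant under complex
conjugation and has at most two elements. -/
theorem stmt_4 (ν : Measure ℝ) [IsProbabilityMeasure ν]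
    (hac : ν ≪ MeasureTheory.volume)
    (hden : ∀ᵐ x ∂(MeasureTheory.volume),
      ν.rnDeriv MeasureTheory.volume x ≤ 1)
    (x₀ : ℝ) (η : ℝ) (hη0 : 0 < η) (hη1 : η < 1)
    (G' : ℂ → ℂ)
    (hG' : ∀ z : ℂ, G' z =
      Complex.log (z + 1 - (x₀ : ℂ) - (η : ℂ)) - Complex.log (z - (x₀ : ℂ)) -
        ∫ y : ℝ, 1 / (z - (y : ℂ)) ∂ν)
    (S : Set ℂ) (hS : S = {z : ℂ | z.im ≠ 0 ∧ G' z = 0}) :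
    (∀ z ∈ S, (starRingEnd ℂ) z ∈ S) ∧ S.encard ≤ 2 := by
  have hconjmem : ∀ z ∈ S, (starRingEnd ℂ) z ∈ S := by
    intro z hzS
    rw [hS] at hzS ⊢
    obtain ⟨hzim, hzeq⟩ := hzS
    refine ⟨by simpa using hzim, ?_⟩
    have harg1 : (z + 1 - (x₀ : ℂ) - (η : ℂ)).arg ≠ π := by
      intro h
      rw [Complex.arg_eq_pi_iff] at h
      apply hzim
      have := h.2
      simpa using this
    have harg2 : (z - (x₀ : ℂ)).arg ≠ π := by
      intro h
      rw [Complex.arg_eq_pi_iff] at h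
      apply hzim
      have := h.2
      simpa using this
    have hint : ∫ y : ℝ, 1 / ((starRingEnd ℂ) z - (y : ℂ)) ∂ν
        = (starRingEnd ℂ) (∫ y : ℝ, 1 / (z - (y : ℂ)) ∂ν) := by
      rw [← integral_conj]
      congr 1
      ext t
      rw [map_div₀, map_one, map_sub, Complex.conj_ofReal]
    have h1 : (starRingEnd ℂ) z + 1 - (x₀ : ℂ) - (η : ℂ)
        = (starRingEnd ℂ) (z + 1 - (x₀ : ℂ) - (η : ℂ)) := by
      rw [map_sub, map_sub, map_add, map_one, Complex.conj_ofReal, Complex.conj_ofReal]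
    have h2 : (starRingEnd ℂ) z - (x₀ : ℂ) = (starRingEnd ℂ) (z - (x₀ : ℂ)) := by
      rw [map_sub, Complex.conj_ofReal]
    rw [hG'] at hzeq ⊢
    rw [h1, h2, Complex.log_conj _ harg1, Complex.log_conj _ harg2, hint,
      ← map_sub, ← map_sub, hzeq, map_zero]
  refine ⟨hconjmem, ?_⟩
  have hroot_eq : ∀ z : ℂ, z ∈ S →
      Complex.log (z + 1 - (x₀ : ℂ) - (η : ℂ)) - Complex.log (z - (x₀ : ℂ)) = mST ν z := by
    intro z hz
    rw [hS] at hz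
    have := hz.2
    rw [hG'] at this
    have h3 := sub_eq_zero.mp this
    exact h3
  have huniq : ∀ z₁ z₂ : ℂ, z₁ ∈ S → z₂ ∈ S → 0 < z₁.im → 0 < z₂.im → z₁ = z₂ := by
    intro z₁ z₂ hz₁ hz₂ h₁ h₂
    exact upper_root_unique hac hden x₀ hη0 hη1 h₁ h₂ (hroot_eq z₁ hz₁) (hroot_eq z₂ hz₂)
  by_cases hex : ∃ z ∈ S, 0 < z.im
  · obtain ⟨z₁, hz₁S, hz₁⟩ := hex
    have hsub : S ⊆ {z₁, (starRingEnd ℂ) z₁} := by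
      intro z hz
      have hzim : z.im ≠ 0 := by rw [hS] at hz; exact hz.1
      rcases lt_or_gt_of_ne hzim with h | h
      · have hconj := hconjmem z hz
        have hcim : 0 < ((starRingEnd ℂ) z).im := by
          rw [Complex.conj_im]
          linarith
        have hzeq : (starRingEnd ℂ) z = z₁ := huniq _ _ hconj hz₁S hcim hz₁
        right
        rw [← hzeq]
        simp
      · left
        exact huniq _ _ hz hz₁S h hz₁
    calc S.encard ≤ ({z₁, (starRingEnd ℂ) z₁} : Set ℂ).encard := Set.encard_mono hsub
      _ ≤ ({(starRingEnd ℂ) z₁} : Set ℂ).encard + 1 := Set.encard_insert_le _ _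
      _ ≤ 2 := by
        rw [Set.encard_singleton]
        norm_num
  · have hS0 : S = ∅ := by
      ext z
      simp only [mem_empty_iff_false, iff_false]
      intro hz
      have hzim : z.im ≠ 0 := by rw [hS] at hz; exact hz.1
      rcases lt_or_gt_of_ne hzim with h | h
      · refine hex ⟨(starRingEnd ℂ) z, hconjmem z hz, ?_⟩
        rw [Complex.conj_im]
        linarith
      · exact hex ⟨z, hz, h⟩
    rw [hS0]
    simp
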